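/- For any rooted finite tree on n vertices, the iterative procedure that removes a root-to-leaf path splitting the tree into components of size at most half, and recurses on each component, terminates after at most ⌈log₂ n⌉ + 1 rounds (where in each round one path is removed from every remaining component). -/

import Mathlib

/-- The iterative procedure that, in each round, removes from every remaining
component a root-to-leaf path splitting it into components of at most half
the size, terminates after at most `⌈log₂ n⌉ + 1` rounds.  Abstractly: if
`m k` is the maximal component size after `k` rounds, with `m 0 ≤ n` and
`2 * m (k+1) ≤ m k`, then after `⌈log₂ n⌉ + 1` rounds nothing is left. -/
theorem stmt_2 (n : ℕ) (m : ℕ → ℕ) (h0 : m 0 ≤ n)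
    (hhalf : ∀ k, 2 * m (k + 1) ≤ m k) :
    m (Nat.clog 2 n + 1) = 0 := by
  have key : ∀ k, 2 ^ k * m k ≤ n := by
    intro k
    induction k with
    | zero => simpa using h0
    | succ k ih =>
      calc 2 ^ (k + 1) * m (k + 1) = 2 ^ k * (2 * m (k + 1)) := by ring
        _ ≤ 2 ^ k * m k := Nat.mul_le_mul_left _ (hhalf k)
        _ ≤ n := ih
  have h1 : 2 ^ Nat.clog 2 n * m (Nat.clog 2 n) ≤ 2 ^ Nat.clog 2 n :=
    (key _).trans (Nat.le_pow_clog one_lt_two n)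
  have h2 : m (Nat.clog 2 n) ≤ 1 := by
    have hp : 0 < 2 ^ Nat.clog 2 n := Nat.pow_pos (by norm_num)
    nlinarith [Nat.le_of_mul_le_mul_left (by simpa [Nat.mul_comm] using h1) hp]
  have := hhalf (Nat.clog 2 n)
  omega
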